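/- There exist Lipschitz functions f₁, f₂ : (0,∞) → ℝ and C¹ functions α₁, α₂ : (0,∞) → ℝ with α_k(u) > b > 0, α_k bounded, and |u·α_k'(u)| ≤ C for all u > 0, such that for some δ > 0 and all u > 0, (1/u)·Σ_{k=1}^{2} (α_k(u)·f_k(u) − f_k(α_k(u)·u)) ≤ −δ. In particular, the multi-term calculus lemma fails if the hypothesis |u α_k'(u)| → 0 is weakened to |u α_k'(u)| ≤ C. -/

import Mathlib

open Real Set Filter

noncomputable def PP (y : ℝ) : ℝ := 3*y^2 - 2*y^3

noncomputable def psi (L : ℝ) : ℝ :=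
  (⌊L + 51/100⌋ : ℝ) + PP (min 1 (50 * Int.fract (L + 51/100)))

lemma hasDerivAt_PP (y : ℝ) : HasDerivAt PP (6*y - 6*y^2) y := by
  have h : HasDerivAt PP (3 * (((2:ℕ):ℝ) * y^(2-1)) - 2 * (((3:ℕ):ℝ) * y^(3-1))) y :=
    ((hasDerivAt_pow 2 y).const_mul (3:ℝ)).sub ((hasDerivAt_pow 3 y).const_mul (2:ℝ))
  convert h using 1
  push_cast
  ring

/-- gluing lemma -/
lemma glue {f g h : ℝ → ℝ} {x d : ℝ} (hg : HasDerivAt g d x) (hh : HasDerivAt h d x)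
    (hfg : ∀ᶠ y in nhds x, y ≤ x → f y = g y) (hfh : ∀ᶠ y in nhds x, x ≤ y → f y = h y) :
    HasDerivAt f d x := by
  have hL : HasDerivWithinAt f d (Set.Iic x) x := by
    refine (hg.hasDerivWithinAt (s := Set.Iic x)).congr_of_eventuallyEq ?_ ?_
    · exact (eventually_mem_nhdsWithin.and (hfg.filter_mono nhdsWithin_le_nhds)).mono
        (fun y hy => hy.2 hy.1)
    · exact hfg.self_of_nhds le_rfl
  have hR : HasDerivWithinAt f d (Set.Ici x) x := by
    refine (hh.hasDerivWithinAt (s := Set.Ici x)).congr_of_eventuallyEq ?_ ?_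
    · exact (eventually_mem_nhdsWithin.and (hfh.filter_mono nhdsWithin_le_nhds)).mono
        (fun y hy => hy.2 hy.1)
    · exact hfh.self_of_nhds le_rfl
  have := hL.union hR
  rwa [Set.Iic_union_Ici, hasDerivWithinAt_univ] at this

lemma psi_eq_PP {x : ℝ} {m : ℤ} (h1 : (m:ℝ) ≤ x + 51/100) (h2 : x + 51/100 ≤ m + 1/50) :
    psi x = m + PP (50 * (x + 51/100 - m)) := by
  have hfl : ⌊x + 51/100⌋ = m := by
    rw [Int.floor_eq_iff]
    constructor
    · exact_mod_cast h1
    · push_cast; linarith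
  have hfr : Int.fract (x + 51/100) = x + 51/100 - m := by
    rw [Int.fract, hfl]
  rw [psi, hfl, hfr, min_eq_right]
  linarith

lemma psi_eq_const {x : ℝ} {m : ℤ} (h1 : (m:ℝ) + 1/50 ≤ x + 51/100) (h2 : x + 51/100 < m + 1) :
    psi x = m + 1 := by
  have hfl : ⌊x + 51/100⌋ = m := by
    rw [Int.floor_eq_iff]
    constructor
    · push_cast; linarith
    · push_cast; linarith
  have hfr : Int.fract (x + 51/100) = x + 51/100 - m := by
    rw [Int.fract, hfl]
  rw [psi, hfl, hfr, min_eq_left, PP]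
  · norm_num
  · linarith

lemma hasDerivAt_G (m : ℤ) (x : ℝ) :
    HasDerivAt (fun y : ℝ => (m:ℝ) + PP (50*(y + 51/100 - (m:ℝ))))
      ((6*(50*(x + 51/100 - (m:ℝ))) - 6*(50*(x + 51/100 - (m:ℝ)))^2) * 50) x := by
  have hin : HasDerivAt (fun y : ℝ => 50*(y + 51/100 - (m:ℝ))) (50 * 1) x :=
    (((hasDerivAt_id x).add_const (51/100:ℝ)).sub_const ((m:ℝ))).const_mul 50
  have h := (hasDerivAt_PP (50*(x + 51/100 - (m:ℝ)))).comp x (by simpa using hin)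
  have h2 := h.const_add (m:ℝ)
  simpa [Function.comp] using h2

lemma psi_hasDeriv (L : ℝ) : ∃ d, HasDerivAt psi d L ∧ 0 ≤ d ∧ d ≤ 75 := by
  obtain ⟨n, t, hz, ht0, ht1⟩ : ∃ (n : ℤ) (t : ℝ), (n:ℝ) + t = L + 51/100 ∧ 0 ≤ t ∧ t < 1 :=
    ⟨⌊L + 51/100⌋, Int.fract _, Int.floor_add_fract _, Int.fract_nonneg _, Int.fract_lt_one _⟩
  rcases eq_or_lt_of_le ht0 with h0 | h0
  · -- t = 0
    refine ⟨0, ?_, le_refl 0, by norm_num⟩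
    refine glue (g := fun _ => (n:ℝ)) (h := fun y : ℝ => (n:ℝ) + PP (50*(y + 51/100 - (n:ℝ))))
      (hasDerivAt_const L (n:ℝ)) ?_ ?_ ?_
    · have hder := hasDerivAt_G n L
      have he : (6*(50*(L + 51/100 - (n:ℝ))) - 6*(50*(L + 51/100 - (n:ℝ)))^2) * 50 = 0 := by
        have hL0 : L + 51/100 - (n:ℝ) = 0 := by linarith
        rw [hL0]; ring
      rwa [he] at hder
    · rw [Metric.eventually_nhds_iff]
      refine ⟨1/2, by norm_num, fun y hy hyL => ?_⟩
      rw [Real.dist_eq] at hy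
      obtain ⟨hya, hyb⟩ := abs_lt.1 hy
      rcases eq_or_lt_of_le hyL with rfl | hlt
      · have h1 : psi y = (n:ℝ) + PP (50*(y + 51/100 - (n:ℝ))) :=
          psi_eq_PP (by linarith) (by linarith)
        have h2 : y + 51/100 - (n:ℝ) = 0 := by linarith
        rw [h1, h2, PP]; norm_num
      · have h1 := psi_eq_const (x := y) (m := n - 1) (by push_cast; linarith)
          (by push_cast; linarith)
        rw [h1]; push_cast; ring
    · rw [Metric.eventually_nhds_iff]
      refine ⟨1/50, by norm_num, fun y hy hyL => ?_⟩
      rw [Real.dist_eq] at hy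
      obtain ⟨hya, hyb⟩ := abs_lt.1 hy
      exact psi_eq_PP (by linarith) (by linarith)
  · rcases lt_trichotomy t (1/50) with h1 | h1 | h1
    · -- 0 < t < 1/50 : window interior
      refine ⟨(6*(50*(L + 51/100 - (n:ℝ))) - 6*(50*(L + 51/100 - (n:ℝ)))^2) * 50, ?_, ?_, ?_⟩
      · refine glue (hasDerivAt_G n L) (hasDerivAt_G n L) ?_ ?_ <;>
        · rw [Metric.eventually_nhds_iff]
          refine ⟨min t (1/50 - t), lt_min h0 (by linarith), fun y hy _ => ?_⟩
          rw [Real.dist_eq] at hy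
          have hy1 := (abs_lt.1 (lt_of_lt_of_le hy (min_le_left _ _))).1
          have hy2 := (abs_lt.1 (lt_of_lt_of_le hy (min_le_right _ _))).2
          exact psi_eq_PP (by linarith) (by linarith)
      · have hw : L + 51/100 - (n:ℝ) = t := by linarith
        rw [hw]; nlinarith
      · have hw : L + 51/100 - (n:ℝ) = t := by linarith
        rw [hw]; nlinarith [sq_nonneg (2*(50*t) - 1)]
    · -- t = 1/50 : window right edge
      refine ⟨0, ?_, le_refl 0, by norm_num⟩
      refine glue (g := fun y : ℝ => (n:ℝ) + PP (50*(y + 51/100 - (n:ℝ))))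
        (h := fun _ => (n:ℝ) + 1) ?_ (hasDerivAt_const L ((n:ℝ)+1)) ?_ ?_
      · have hder := hasDerivAt_G n L
        have he : (6*(50*(L + 51/100 - (n:ℝ))) - 6*(50*(L + 51/100 - (n:ℝ)))^2) * 50 = 0 := by
          have hw : L + 51/100 - (n:ℝ) = 1/50 := by linarith
          rw [hw]; norm_num
        rwa [he] at hder
      · rw [Metric.eventually_nhds_iff]
        refine ⟨1/50, by norm_num, fun y hy hyL => ?_⟩
        rw [Real.dist_eq] at hy
        obtain ⟨hya, hyb⟩ := abs_lt.1 hy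
        exact psi_eq_PP (by linarith) (by linarith)
      · rw [Metric.eventually_nhds_iff]
        refine ⟨1/2, by norm_num, fun y hy hyL => ?_⟩
        rw [Real.dist_eq] at hy
        obtain ⟨hya, hyb⟩ := abs_lt.1 hy
        have he := psi_eq_const (x := y) (m := n) (by linarith) (by push_cast; linarith)
        rw [he]
    · -- plateau
      refine ⟨0, ?_, le_refl 0, by norm_num⟩
      refine glue (hasDerivAt_const L ((n:ℝ)+1)) (hasDerivAt_const L ((n:ℝ)+1)) ?_ ?_ <;>
      · rw [Metric.eventually_nhds_iff]
        refine ⟨min (t - 1/50) (1 - t), lt_min (by linarith) (by linarith), fun y hy _ => ?_⟩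
        rw [Real.dist_eq] at hy
        have hy1 := (abs_lt.1 (lt_of_lt_of_le hy (min_le_left _ _))).1
        have hy2 := (abs_lt.1 (lt_of_lt_of_le hy (min_le_right _ _))).2
        have he := psi_eq_const (x := y) (m := n) (by linarith) (by push_cast; linarith)
        rw [he]

noncomputable def aa (L : ℝ) : ℝ := psi L - L
noncomputable def al1 (u : ℝ) : ℝ := Real.exp (aa (Real.log u))
noncomputable def ff1 (u : ℝ) : ℝ := 8 * u * Real.cos (2*π*Real.log u)
noncomputable def ff2 (u : ℝ) : ℝ := -(Real.exp (-(1/4:ℝ)) * u * Real.cos (4*π*Real.log u))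

lemma aa_bounds (L : ℝ) : 49/100 ≤ aa L ∧ aa L ≤ 151/100 := by
  have hfl : (⌊L + 51/100⌋ : ℝ) = (L + 51/100) - Int.fract (L + 51/100) := by
    rw [Int.self_sub_fract]
  have ht0 : 0 ≤ Int.fract (L + 51/100) := Int.fract_nonneg _
  have ht1 : Int.fract (L + 51/100) < 1 := Int.fract_lt_one _
  rw [aa, psi, hfl]
  rcases le_or_gt (50 * Int.fract (L + 51/100)) 1 with h | h
  · rw [min_eq_right h, PP]
    constructor <;>
      nlinarith [mul_nonneg (sq_nonneg (1 - 50 * Int.fract (L + 51/100)))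
        (by linarith : (0:ℝ) ≤ 1 + 2*(50 * Int.fract (L + 51/100))),
        mul_nonneg (mul_nonneg ht0 ht0) ht0, sq_nonneg (Int.fract (L + 51/100))]
  · rw [min_eq_left h.le, PP]
    constructor <;> nlinarith

lemma exp_two_le_eight : Real.exp 2 ≤ 8 := by
  have h := Real.exp_one_lt_d9
  have h2 : Real.exp 2 = Real.exp 1 * Real.exp 1 := by
    rw [← Real.exp_add]; norm_num
  nlinarith [Real.exp_pos 1]

lemma al1_one_lt (u : ℝ) : 1 < al1 u :=
  Real.one_lt_exp_iff.mpr (by linarith [(aa_bounds (Real.log u)).1])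

lemma al1_le_eight (u : ℝ) : al1 u ≤ 8 :=
  le_trans (Real.exp_le_exp.mpr (by linarith [(aa_bounds (Real.log u)).2])) exp_two_le_eight

lemma al1_hasDeriv (u : ℝ) (hu : 0 < u) : ∃ d, HasDerivAt al1 d u ∧ |u * d| ≤ 600 := by
  obtain ⟨d, hd, hd0, hd75⟩ := psi_hasDeriv (Real.log u)
  have hlog : HasDerivAt Real.log u⁻¹ u := Real.hasDerivAt_log hu.ne'
  have hcomp : HasDerivAt (fun v => psi (Real.log v)) (d * u⁻¹) u := by
    simpa [Function.comp_def] using hd.comp u hlog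
  have hsub : HasDerivAt (fun v => psi (Real.log v) - Real.log v) (d * u⁻¹ - u⁻¹) u :=
    hcomp.sub hlog
  have hexp := hsub.exp
  refine ⟨Real.exp (psi (Real.log u) - Real.log u) * (d * u⁻¹ - u⁻¹), hexp, ?_⟩
  have he8 : Real.exp (psi (Real.log u) - Real.log u) ≤ 8 := al1_le_eight u
  have he0 : 0 < Real.exp (psi (Real.log u) - Real.log u) := Real.exp_pos _
  have hrw : u * (Real.exp (psi (Real.log u) - Real.log u) * (d * u⁻¹ - u⁻¹))
      = Real.exp (psi (Real.log u) - Real.log u) * (d - 1) := by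
    field_simp
  rw [hrw, abs_mul, abs_of_pos he0]
  have habs : |d - 1| ≤ 74 := by
    rw [abs_le]; constructor <;> linarith
  calc Real.exp (psi (Real.log u) - Real.log u) * |d - 1| ≤ 8 * 74 := by
        apply mul_le_mul he8 habs (abs_nonneg _) (by norm_num)
    _ ≤ 600 := by norm_num

lemma ff1_hasDeriv (v : ℝ) (hv : 0 < v) :
    HasDerivAt ff1 (8*Real.cos (2*π*Real.log v) - 16*π*Real.sin (2*π*Real.log v)) v := by
  have hlog : HasDerivAt Real.log v⁻¹ v := Real.hasDerivAt_log hv.ne'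
  have hin : HasDerivAt (fun w => 2*π*Real.log w) (2*π*v⁻¹) v := by
    simpa [mul_comm] using hlog.const_mul (2*π)
  have hcos : HasDerivAt (fun w => Real.cos (2*π*Real.log w))
      (-Real.sin (2*π*Real.log v) * (2*π*v⁻¹)) v := by
    simpa [Function.comp_def] using (Real.hasDerivAt_cos (2*π*Real.log v)).comp v hin
  have hid : HasDerivAt (fun w : ℝ => 8*w) 8 v := by
    simpa using (hasDerivAt_id v).const_mul (8:ℝ)
  have h := hid.mul hcos
  have he : 8 * Real.cos (2*π*Real.log v) + (8*v) * (-Real.sin (2*π*Real.log v) * (2*π*v⁻¹))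
      = 8*Real.cos (2*π*Real.log v) - 16*π*Real.sin (2*π*Real.log v) := by
    field_simp
    ring
  rw [he] at h
  exact h

lemma ff2_hasDeriv (v : ℝ) (hv : 0 < v) :
    HasDerivAt ff2 (-(Real.exp (-(1/4:ℝ)) * Real.cos (4*π*Real.log v))
      + Real.exp (-(1/4:ℝ)) * (4*π) * Real.sin (4*π*Real.log v)) v := by
  have hlog : HasDerivAt Real.log v⁻¹ v := Real.hasDerivAt_log hv.ne'
  have hin : HasDerivAt (fun w => 4*π*Real.log w) (4*π*v⁻¹) v := by
    simpa [mul_comm] using hlog.const_mul (4*π)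
  have hcos : HasDerivAt (fun w => Real.cos (4*π*Real.log w))
      (-Real.sin (4*π*Real.log v) * (4*π*v⁻¹)) v := by
    simpa [Function.comp_def] using (Real.hasDerivAt_cos (4*π*Real.log v)).comp v hin
  have hid : HasDerivAt (fun w : ℝ => Real.exp (-(1/4:ℝ))*w) (Real.exp (-(1/4:ℝ))) v := by
    simpa using (hasDerivAt_id v).const_mul (Real.exp (-(1/4:ℝ)))
  have h := (hid.mul hcos).neg
  have he : -(Real.exp (-(1/4:ℝ)) * Real.cos (4*π*Real.log v)
        + (Real.exp (-(1/4:ℝ))*v) * (-Real.sin (4*π*Real.log v) * (4*π*v⁻¹)))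
      = -(Real.exp (-(1/4:ℝ)) * Real.cos (4*π*Real.log v))
        + Real.exp (-(1/4:ℝ)) * (4*π) * Real.sin (4*π*Real.log v) := by
    field_simp
    ring
  rw [he] at h
  exact h

lemma lip1 : ∀ x y : ℝ, 0 < x → 0 < y → |ff1 x - ff1 y| ≤ 60 * |x - y| := by
  intro x y hx hy
  have hb : ∀ v : ℝ, v ∈ Set.Ioi (0:ℝ) →
      ‖8*Real.cos (2*π*Real.log v) - 16*π*Real.sin (2*π*Real.log v)‖ ≤ 60 := by
    intro v _
    rw [Real.norm_eq_abs, abs_le]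
    have h1 := Real.neg_one_le_cos (2*π*Real.log v)
    have h2 := Real.cos_le_one (2*π*Real.log v)
    have h3 := Real.neg_one_le_sin (2*π*Real.log v)
    have h4 := Real.sin_le_one (2*π*Real.log v)
    have h5 := Real.pi_gt_three
    have h6 := Real.pi_lt_d2
    constructor <;> nlinarith
  have h := Convex.norm_image_sub_le_of_norm_hasDerivWithin_le
    (C := 60) (f := ff1) (s := Set.Ioi (0:ℝ))
    (f' := fun v => 8*Real.cos (2*π*Real.log v) - 16*π*Real.sin (2*π*Real.log v))
    (fun v hv => (ff1_hasDeriv v hv).hasDerivWithinAt) hb (convex_Ioi 0) hy hx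
  simpa [Real.norm_eq_abs] using h

lemma lip2 : ∀ x y : ℝ, 0 < x → 0 < y → |ff2 x - ff2 y| ≤ 60 * |x - y| := by
  intro x y hx hy
  have hE : Real.exp (-(1/4:ℝ)) ≤ 1 := by
    rw [show (1:ℝ) = Real.exp 0 from (Real.exp_zero).symm]
    exact Real.exp_le_exp.mpr (by norm_num)
  have hE0 : 0 < Real.exp (-(1/4:ℝ)) := Real.exp_pos _
  have hb : ∀ v : ℝ, v ∈ Set.Ioi (0:ℝ) →
      ‖-(Real.exp (-(1/4:ℝ)) * Real.cos (4*π*Real.log v))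
        + Real.exp (-(1/4:ℝ)) * (4*π) * Real.sin (4*π*Real.log v)‖ ≤ 60 := by
    intro v _
    rw [Real.norm_eq_abs, abs_le]
    have h1 := Real.neg_one_le_cos (4*π*Real.log v)
    have h2 := Real.cos_le_one (4*π*Real.log v)
    have h3 := Real.neg_one_le_sin (4*π*Real.log v)
    have h4 := Real.sin_le_one (4*π*Real.log v)
    have h5 := Real.pi_gt_three
    have h6 := Real.pi_lt_d2
    have hc1 : Real.exp (-(1/4:ℝ)) * Real.cos (4*π*Real.log v) ≤ 1 := by nlinarith
    have hc2 : -1 ≤ Real.exp (-(1/4:ℝ)) * Real.cos (4*π*Real.log v) := by nlinarith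
    have hp : 0 ≤ Real.exp (-(1/4:ℝ)) * (4*π) := by positivity
    have hp2 : Real.exp (-(1/4:ℝ)) * (4*π) ≤ 4*3.15 := by nlinarith
    have hs1 : Real.exp (-(1/4:ℝ)) * (4*π) * Real.sin (4*π*Real.log v)
        ≤ Real.exp (-(1/4:ℝ)) * (4*π) := by nlinarith
    have hs2 : -(Real.exp (-(1/4:ℝ)) * (4*π)) ≤
        Real.exp (-(1/4:ℝ)) * (4*π) * Real.sin (4*π*Real.log v) := by nlinarith
    constructor <;> nlinarith
  have h := Convex.norm_image_sub_le_of_norm_hasDerivWithin_le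
    (C := 60) (f := ff2) (s := Set.Ioi (0:ℝ))
    (f' := fun v => -(Real.exp (-(1/4:ℝ)) * Real.cos (4*π*Real.log v))
        + Real.exp (-(1/4:ℝ)) * (4*π) * Real.sin (4*π*Real.log v))
    (fun v hv => (ff2_hasDeriv v hv).hasDerivWithinAt) hb (convex_Ioi 0) hy hx
  simpa [Real.norm_eq_abs] using h

set_option maxHeartbeats 1000000 in
theorem stmt3 : ∃ (f₁ f₂ α₁ α₂ : ℝ → ℝ) (b C K δ : ℝ),
    0 < b ∧ 0 < C ∧ 0 < δ ∧
    (∀ x y, 0 < x → 0 < y → |f₁ x - f₁ y| ≤ K * |x - y|) ∧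
    (∀ x y, 0 < x → 0 < y → |f₂ x - f₂ y| ≤ K * |x - y|) ∧
    (∀ u, 0 < u → b < α₁ u) ∧ (∀ u, 0 < u → b < α₂ u) ∧
    (∀ u, 0 < u → α₁ u ≤ C) ∧ (∀ u, 0 < u → α₂ u ≤ C) ∧
    DifferentiableOn ℝ α₁ (Set.Ioi 0) ∧ DifferentiableOn ℝ α₂ (Set.Ioi 0) ∧
    (∀ u, 0 < u → |u * deriv α₁ u| ≤ C) ∧ (∀ u, 0 < u → |u * deriv α₂ u| ≤ C) ∧
    (∀ u, 0 < u →
      (1 / u) * ((α₁ u * f₁ u - f₁ (α₁ u * u)) + (α₂ u * f₂ u - f₂ (α₂ u * u))) ≤ -δ) := by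
  have hE14 : Real.exp ((1:ℝ)/4) ≤ 8 :=
    le_trans (Real.exp_le_exp.mpr (by norm_num)) exp_two_le_eight
  refine ⟨ff1, ff2, al1, fun _ => Real.exp (1/4), 1, 600, 60, 1,
    one_pos, by norm_num, one_pos, lip1, lip2,
    fun u _ => al1_one_lt u,
    fun u _ => Real.one_lt_exp_iff.mpr (by norm_num),
    fun u _ => le_trans (al1_le_eight u) (by norm_num),
    fun u _ => le_trans hE14 (by norm_num),
    fun u hu => ((al1_hasDeriv u hu).choose_spec.1).differentiableAt.differentiableWithinAt,
    (differentiable_const _).differentiableOn,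
    ?_, ?_, ?_⟩
  · intro u hu
    obtain ⟨d, hd, hb⟩ := al1_hasDeriv u hu
    rw [hd.deriv]
    exact hb
  · intro u hu
    simp
  · intro u hu
    -- rewrite the expression
    have hlogmul1 : Real.log (al1 u * u) = psi (Real.log u) := by
      simp only [al1]
      rw [Real.log_mul (Real.exp_pos _).ne' hu.ne', Real.log_exp, aa]; ring
    have hlogmul2 : Real.log (Real.exp ((1:ℝ)/4) * u) = 1/4 + Real.log u := by
      rw [Real.log_mul (Real.exp_pos _).ne' hu.ne', Real.log_exp]
    have hff1 : ff1 (al1 u * u) = 8*(al1 u * u)*Real.cos (2*π*psi (Real.log u)) := by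
      simp only [ff1, hlogmul1]
    have hcos2 : Real.cos (4*π*Real.log (Real.exp ((1:ℝ)/4) * u)) = -Real.cos (4*π*Real.log u) := by
      rw [hlogmul2, show (4:ℝ)*π*(1/4 + Real.log u) = π + 4*π*Real.log u from by ring]
      simp [Real.cos_add]
    have hE : Real.exp ((1:ℝ)/4) * Real.exp (-(1/4:ℝ)) = 1 := by
      rw [← Real.exp_add]; norm_num
    have hterm2 : Real.exp ((1:ℝ)/4) * ff2 u - ff2 (Real.exp ((1:ℝ)/4) * u)
        = -2*u*Real.cos (4*π*Real.log u) := by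
      simp only [ff2, hcos2]
      linear_combination (-2*u * Real.cos (4*π*Real.log u)) * hE
    have hterm1 : al1 u * ff1 u - ff1 (al1 u * u)
        = 8*(al1 u)*u*(Real.cos (2*π*Real.log u) - Real.cos (2*π*psi (Real.log u))) := by
      rw [hff1]; simp only [ff1]; ring
    have hsum : (1/u) * ((al1 u * ff1 u - ff1 (al1 u * u))
          + (Real.exp ((1:ℝ)/4) * ff2 u - ff2 (Real.exp ((1:ℝ)/4) * u)))
        = 8*(al1 u)*(Real.cos (2*π*Real.log u) - Real.cos (2*π*psi (Real.log u)))
          - 2*Real.cos (4*π*Real.log u) := by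
      rw [hterm1, hterm2]
      field_simp
      ring
    rw [hsum]
    -- now the core inequality
    obtain ⟨n, t, hz, ht0, ht1⟩ : ∃ (n : ℤ) (t : ℝ),
        (n:ℝ) + t = Real.log u + 51/100 ∧ 0 ≤ t ∧ t < 1 :=
      ⟨⌊Real.log u + 51/100⌋, Int.fract _, Int.floor_add_fract _, Int.fract_nonneg _,
        Int.fract_lt_one _⟩
    have hA1 : 1 ≤ al1 u := (al1_one_lt u).le
    have hA8 : al1 u ≤ 8 := al1_le_eight u
    rcases le_or_gt t (1/50) with hw | hw
    · -- window case
      have hLrep : Real.log u = (n:ℝ) + t - 51/100 := by linarith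
      have hc2L : Real.cos (2*π*Real.log u) = -Real.cos (2*π*(t - 1/100)) := by
        rw [show 2*π*Real.log u = (2*π*(t - 1/100) - π) + (n:ℝ)*(2*π) from by
          rw [hLrep]; ring]
        rw [Real.cos_add_int_mul_two_pi, Real.cos_sub_pi]
      have hc4L : Real.cos (4*π*Real.log u) = Real.cos (4*π*(t - 1/100)) := by
        rw [show 4*π*Real.log u = (4*π*(t - 1/100)) + ((2*n - 1 : ℤ):ℝ)*(2*π) from by
          rw [hLrep]; push_cast; ring]
        rw [Real.cos_add_int_mul_two_pi]
      rw [hc2L, hc4L]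
      have hs2 : (t - 1/100)^2 ≤ 1/10000 := by nlinarith
      have hb1 : 1 - (2*π*(t-1/100))^2/2 ≤ Real.cos (2*π*(t-1/100)) :=
        Real.one_sub_sq_div_two_le_cos
      have hb2 : 1 - (4*π*(t-1/100))^2/2 ≤ Real.cos (4*π*(t-1/100)) :=
        Real.one_sub_sq_div_two_le_cos
      have hc1le : Real.cos (2*π*(t-1/100)) ≤ 1 := Real.cos_le_one _
      have hcψ : -1 ≤ Real.cos (2*π*psi (Real.log u)) := Real.neg_one_le_cos _
      have hπ2 : π^2 ≤ 10 := by nlinarith [Real.pi_gt_three, Real.pi_lt_d2]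
      have hps : π^2 * (t-1/100)^2 ≤ 10 * (1/10000) :=
        mul_le_mul hπ2 hs2 (sq_nonneg _) (by norm_num)
      have hX : 0 ≤ 1 - Real.cos (2*π*(t-1/100)) := by linarith
      have hstep2 : 8*(al1 u) * (-Real.cos (2*π*(t-1/100)) - Real.cos (2*π*psi (Real.log u)))
          ≤ 8*(al1 u) * (1 - Real.cos (2*π*(t-1/100))) :=
        mul_le_mul_of_nonneg_left (by linarith) (by linarith)
      have hstep3 : 8*(al1 u) * (1 - Real.cos (2*π*(t-1/100)))
          ≤ 64 * (1 - Real.cos (2*π*(t-1/100))) :=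
        mul_le_mul_of_nonneg_right (by linarith) hX
      linarith [hstep2, hstep3, hb1, hb2, hps]
    · -- plateau case
      have hpsi : psi (Real.log u) = (n:ℝ) + 1 :=
        psi_eq_const (by linarith) (by linarith)
      have hcψ : Real.cos (2*π*psi (Real.log u)) = 1 := by
        rw [hpsi, show 2*π*((n:ℝ)+1) = ((n+1 : ℤ):ℝ)*(2*π) from by push_cast; ring,
          Real.cos_int_mul_two_pi]
      have hdbl : Real.cos (4*π*Real.log u) = 2*(Real.cos (2*π*Real.log u))^2 - 1 := by
        rw [show (4:ℝ)*π*Real.log u = 2*(2*π*Real.log u) from by ring, Real.cos_two_mul]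
      rw [hcψ, hdbl]
      have hcle : Real.cos (2*π*Real.log u) ≤ 1 := Real.cos_le_one _
      have hcge : -1 ≤ Real.cos (2*π*Real.log u) := Real.neg_one_le_cos _
      nlinarith [mul_nonneg (show (0:ℝ) ≤ 8*(al1 u) - 8 by linarith)
        (show (0:ℝ) ≤ 1 - Real.cos (2*π*Real.log u) by linarith),
        sq_nonneg (Real.cos (2*π*Real.log u) - 1)]
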